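/- arXiv:1306.0870 — 6 statements merged into one kernel-verified Lean document; each statement's English description precedes it below -/
import Mathlib

section
/- Let A ⊆ S be commutative rings with S = A + cS and cS ∩ A = cA for a nonzerodivisor c of S lying in A. If J₁, …, Jₙ are ideals of S each containing c, then (J₁J₂⋯Jₙ) ∩ A = (J₁ ∩ A)(J₂ ∩ A)⋯(Jₙ ∩ A). -/
/-- Let `A ⊆ S` be commutative rings with `S = A + cS` and `cS ∩ A = cA` for a
nonzerodivisor `c` of `S` lying in `A`. If `J₁, …, Jₙ` are ideals of `S` each containing
`c`, then `(J₁⋯Jₙ) ∩ A = (J₁ ∩ A)⋯(Jₙ ∩ A)`. -/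
theorem stmt4 (S : Type*) [CommRing S] (A : Subring S) (c : S)
    (hcA : c ∈ A) (hreg : c ∈ nonZeroDivisors S)
    (h1 : ∀ s : S, ∃ a ∈ A, ∃ t : S, s = a + c * t)
    (h2 : ∀ a : S, a ∈ A → (∃ t : S, a = c * t) → ∃ b ∈ A, a = c * b)
    (n : ℕ) (J : Fin n → Ideal S) (hJ : ∀ i, c ∈ J i) :
    (∏ i, J i).comap A.subtype = ∏ i, (J i).comap A.subtype := by
  classical
  -- `S = A + cᵐS` for any `m`
  have h1n : ∀ m : ℕ, ∀ s : S, ∃ a ∈ A, ∃ t : S, s = a + c ^ m * t := by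
    intro m
    induction m with
    | zero => intro s; exact ⟨0, A.zero_mem, s, by ring⟩
    | succ m ih =>
      intro s
      obtain ⟨a, ha, t, ht⟩ := h1 s
      obtain ⟨a', ha', t', ht'⟩ := ih t
      exact ⟨a + c * a', A.add_mem ha (A.mul_mem hcA ha'), t', by rw [ht, ht']; ring⟩
  -- `cᵐS ∩ A = cᵐA`
  have h2n : ∀ m : ℕ, ∀ a : S, a ∈ A → (∃ t : S, a = c ^ m * t) → ∃ b ∈ A, a = c ^ m * b := by
    intro m
    induction m with
    | zero => intro a ha _; exact ⟨a, ha, by ring⟩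
    | succ m ih =>
      rintro a ha ⟨t, ht⟩
      obtain ⟨b, hb, hab⟩ := h2 a ha ⟨c ^ m * t, by rw [ht]; ring⟩
      have hbt : b = c ^ m * t := by
        have : c * b = c * (c ^ m * t) := by rw [← hab, ht]; ring
        exact (mul_cancel_left_mem_nonZeroDivisors hreg).mp this
      obtain ⟨b', hb', hbb'⟩ := ih b hb ⟨t, hbt⟩
      exact ⟨b', hb', by rw [hab, hbb']; ring⟩
  have prodmono : ∀ (f g : Fin n → Ideal S), (∀ i, f i ≤ g i) →
      (∏ i, f i) ≤ ∏ i, g i := by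
    intro f g h
    induction (Finset.univ : Finset (Fin n)) using Finset.induction with
    | empty => simp
    | insert _ _ hnot ih =>
      rw [Finset.prod_insert hnot, Finset.prod_insert hnot]
      exact Ideal.mul_mono (h _) ih
  set P : Ideal A := ∏ i, (J i).comap A.subtype with hP
  have hmapP : Ideal.map A.subtype P = ∏ i, Ideal.map A.subtype ((J i).comap A.subtype) :=
    map_prod (Ideal.mapHom A.subtype) _ _
  -- c^n ∈ P
  have hcP : (⟨c, hcA⟩ : A) ^ n ∈ P := by
    have : (⟨c, hcA⟩ : A) ^ n = ∏ i : Fin n, (⟨c, hcA⟩ : A) := by simp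
    rw [this]
    exact Ideal.prod_mem_prod fun i _ => hJ i
  refine le_antisymm ?_ ?_
  · -- hard direction
    intro x hx
    have hx' : (x : S) ∈ ∏ i, J i := hx
    -- each J i is contained in the extension of its contraction
    have hJle : ∀ i, J i ≤ Ideal.map A.subtype ((J i).comap A.subtype) := by
      intro i s hs
      obtain ⟨a, ha, t, ht⟩ := h1 s
      have haJ : a ∈ J i := by
        have : a = s - c * t := by rw [ht]; ring
        rw [this]
        exact sub_mem hs (Ideal.mul_mem_right _ _ (hJ i))
      have h1m : a ∈ Ideal.map A.subtype ((J i).comap A.subtype) :=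
        Ideal.mem_map_of_mem _ (show (⟨a, ha⟩ : A) ∈ (J i).comap A.subtype from haJ)
      have h2m : c ∈ Ideal.map A.subtype ((J i).comap A.subtype) :=
        Ideal.mem_map_of_mem _ (show (⟨c, hcA⟩ : A) ∈ (J i).comap A.subtype from hJ i)
      rw [ht]
      exact add_mem h1m (Ideal.mul_mem_right _ _ h2m)
    have hprod : (∏ i, J i) ≤ Ideal.map A.subtype P := by
      rw [hmapP]
      exact prodmono _ _ hJle
    have hxmap : (x : S) ∈ Ideal.map A.subtype P := hprod hx'
    -- every element of `map A.subtype P` is of the form `q + c^n * t` with `q ∈ P`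
    have key : ∀ (s : S), s ∈ Ideal.map A.subtype P →
        ∃ q ∈ P, ∃ t : S, s = (q : S) + c ^ n * t := by
      intro s hs
      refine Submodule.span_induction ?_ ?_ ?_ ?_ hs
      · rintro _ ⟨q, hq, rfl⟩
        exact ⟨q, hq, 0, by simp⟩
      · exact ⟨0, P.zero_mem, 0, by simp⟩
      · rintro y z _ _ ⟨q, hq, t, rfl⟩ ⟨q', hq', t', rfl⟩
        exact ⟨q + q', P.add_mem hq hq', t + t', by push_cast; ring⟩
      · rintro s y _ ⟨q, hq, t, rfl⟩
        obtain ⟨a, ha, u, hu⟩ := h1n n s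
        refine ⟨⟨a, ha⟩ * q, P.mul_mem_left _ hq, u * (q : S) + s * t, ?_⟩
        push_cast
        rw [smul_eq_mul, hu]
        ring
    obtain ⟨q, hq, t, ht⟩ := key _ hxmap
    have hxq : ((x - q : A) : S) = c ^ n * t := by push_cast; rw [ht]; ring
    obtain ⟨b, hb, hbeq⟩ := h2n n ((x - q : A) : S) (x - q).2 ⟨t, hxq⟩
    have hx_eq : x = q + (⟨c, hcA⟩ : A) ^ n * ⟨b, hb⟩ := by
      apply Subtype.ext
      push_cast
      have h3 : (x : S) - q = c ^ n * b := hbeq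
      linear_combination h3
    rw [hx_eq]
    exact P.add_mem hq (P.mul_mem_right _ hcP)
  · -- easy direction
    rw [← Ideal.map_le_iff_le_comap, hmapP]
    exact prodmono _ _ fun i => Ideal.map_comap_le
end

section
/- Let R ⊆ S be a quadratic extension of commutative rings (meaning st ∈ sR + tR + R for all s, t ∈ S), let A be a subring of R and c ∈ A a nonzerodivisor of S with S = A + cS, and let I be an ideal of R with c ∈ I that is contracted from S (I = IS ∩ R). Then I² = (I ∩ A)·I. -/
/-- Let `R ⊆ S` be a quadratic extension (`st ∈ sR + tR + R` for all `s,t ∈ S`), let `A` be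
a subring of `R` and `c ∈ A` a nonzerodivisor of `S` with `S = A + cS`, and let `I` be an
ideal of `R` with `c ∈ I` that is contracted from `S`. Then `I² = (I ∩ A)·I`. -/
theorem stmt5 (S : Type*) [CommRing S] (R A : Subring S) (hAR : A ≤ R)
    (hquad : ∀ s t : S, ∃ a b r : R, s * t = s * (a : S) + t * (b : S) + (r : S))
    (c : R) (hcA : (c : S) ∈ A) (hreg : (c : S) ∈ nonZeroDivisors S)
    (h1 : ∀ s : S, ∃ a ∈ A, ∃ t : S, s = a + (c : S) * t)
    (I : Ideal R) (hcI : c ∈ I)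
    (hcontr : I = (I.map R.subtype).comap R.subtype) :
    I ^ 2 = Ideal.span {x : R | x ∈ I ∧ (x : S) ∈ A} * I := by
  set J := Ideal.span {x : R | x ∈ I ∧ (x : S) ∈ A} with hJ
  have hJle : J ≤ I := by
    rw [hJ, Ideal.span_le]
    intro x hx
    exact hx.1
  have hmemJ : ∀ x : R, x ∈ I → (x : S) ∈ A → x ∈ J := fun x h1 h2 =>
    Ideal.subset_span ⟨h1, h2⟩
  apply le_antisymm
  · rw [sq]
    rw [Ideal.mul_le]
    intro x hx y hy
    obtain ⟨a, haA, s, hxs⟩ := h1 (x : S)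
    obtain ⟨b, hbA, t, hys⟩ := h1 (y : S)
    obtain ⟨α, β, r, hst⟩ := hquad s t
    set a' : R := ⟨a, hAR haA⟩ with ha'
    set b' : R := ⟨b, hAR hbA⟩ with hb'
    have hcmap : (c : S) ∈ I.map R.subtype := Ideal.mem_map_of_mem _ hcI
    have ha'I : a' ∈ I := by
      rw [hcontr, Ideal.mem_comap]
      have : R.subtype a' = (x : S) - (c : S) * s := by
        simp [ha', hxs]
      rw [this]
      refine sub_mem (Ideal.mem_map_of_mem _ hx) ?_
      rw [mul_comm]
      exact Ideal.mul_mem_left _ s hcmap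
    have hb'I : b' ∈ I := by
      rw [hcontr, Ideal.mem_comap]
      have : R.subtype b' = (y : S) - (c : S) * t := by
        simp [hb', hys]
      rw [this]
      refine sub_mem (Ideal.mem_map_of_mem _ hy) ?_
      rw [mul_comm]
      exact Ideal.mul_mem_left _ t hcmap
    have ha'J : a' ∈ J := hmemJ a' ha'I haA
    have hb'J : b' ∈ J := hmemJ b' hb'I hbA
    have hcJ : c ∈ J := hmemJ c hcI hcA
    have key : x * y = a' * b' + a' * (y - b') + b' * (x - a') +
        c * ((x - a') * α) + c * ((y - b') * β) + c * (c * r) := by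
      apply Subtype.ext
      push_cast
      rw [hxs, hys]
      ring_nf
      linear_combination (c : S) ^ 2 * hst
    rw [key]
    refine add_mem (add_mem (add_mem (add_mem (add_mem ?_ ?_) ?_) ?_) ?_) ?_
    · exact Ideal.mul_mem_mul ha'J hb'I
    · exact Ideal.mul_mem_mul ha'J (I.sub_mem hy hb'I)
    · exact Ideal.mul_mem_mul hb'J (I.sub_mem hx ha'I)
    · exact Ideal.mul_mem_mul hcJ (I.mul_mem_right α (I.sub_mem hx ha'I))
    · exact Ideal.mul_mem_mul hcJ (I.mul_mem_right β (I.sub_mem hy hb'I))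
    · exact Ideal.mul_mem_mul hcJ (I.mul_mem_right r hcI)
  · rw [sq]
    exact mul_le_mul' hJle le_rfl
end

section
/- Let A be a commutative ring, I an ideal of A, c ∈ I a nonzerodivisor, and C = {cᵏ : k > 0}. If K is an A-module that is C-divisible (cK = K) and C-torsion-free (c is a nonzerodivisor on K), then Extᴬⁱ(A/Iᵏ, K) = 0 for all i ≥ 0 and k ≥ 1. -/
open CategoryTheory

universe u

lemma aux_homology_subsingleton {A : Type u} [CommRing A] {Q : CochainComplex (ModuleCat.{u} A) ℕ}
    (f : Q ⟶ Q) [IsIso f] (h : Homotopy f 0) (i : ℕ) :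
    Subsingleton (Q.homology i) := by
  have h0 : HomologicalComplex.homologyMap f i = 0 := by
    rw [h.homologyMap_eq i]
    simp
  have hiso : IsIso (HomologicalComplex.homologyMap f i) := by
    change IsIso ((HomologicalComplex.homologyFunctor (ModuleCat.{u} A) (ComplexShape.up ℕ) i).map f)
    infer_instance
  have hid : 𝟙 (Q.homology i) = 0 := by
    obtain ⟨g, hg1, hg2⟩ := hiso.out
    rw [h0] at hg1
    simpa using hg1.symm
  refine subsingleton_of_forall_eq 0 (fun x => ?_)
  calc x = (𝟙 (Q.homology i) : _ ⟶ _) x := rfl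
    _ = (0 : Q.homology i ⟶ Q.homology i) x := by rw [hid]
    _ = 0 := rfl

/-- Let `A` be a commutative ring, `I` an ideal, `c ∈ I` a nonzerodivisor. If `K` is an
`A`-module that is divisible by `c` (`cK = K`) and `c`-torsion-free (`c` is a
nonzerodivisor on `K`), then `Extᴬⁱ(A/Iᵏ, K) = 0` for all `i ≥ 0` and `k ≥ 1`. -/
theorem stmt8 {A : Type u} [CommRing A] (I : Ideal A) (c : A) (hcI : c ∈ I)
    (hreg : c ∈ nonZeroDivisors A)
    (K : Type u) [AddCommGroup K] [Module A K]
    (hdiv : ∀ y : K, ∃ z : K, y = c • z)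
    (htf : ∀ y : K, c • y = 0 → y = 0)
    (i k : ℕ) (hk : 1 ≤ k) :
    Subsingleton (((Ext A (ModuleCat.{u} A) i).obj
        (Opposite.op (ModuleCat.of A (A ⧸ I ^ k)))).obj (ModuleCat.of A K)) := by
  classical
  -- c ^ k kills A ⧸ I ^ k
  have hm0 : ∀ x : A ⧸ I ^ k, c ^ k • x = 0 := by
    intro x
    obtain ⟨a, rfl⟩ := Submodule.Quotient.mk_surjective (I ^ k) x
    rw [← Submodule.Quotient.mk_smul, Submodule.Quotient.mk_eq_zero]
    have hmem : c ^ k ∈ I ^ k := Ideal.pow_mem_pow hcI k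
    simpa [smul_eq_mul, mul_comm] using Ideal.mul_mem_left (I ^ k) a hmem
  -- powers of c act bijectively on K
  have hinj : ∀ (n : ℕ) (y : K), c ^ n • y = 0 → y = 0 := by
    intro n
    induction n with
    | zero => intro y hy; simpa using hy
    | succ n ih =>
      intro y hy
      rw [pow_succ, mul_smul] at hy
      exact htf y (ih _ hy)
  have hsur : ∀ (n : ℕ) (y : K), ∃ z : K, y = c ^ n • z := by
    intro n
    induction n with
    | zero => intro y; exact ⟨y, by simp⟩
    | succ n ih =>
      intro y
      obtain ⟨z₁, hz₁⟩ := hdiv y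
      obtain ⟨z₂, hz₂⟩ := ih z₁
      exact ⟨z₂, by rw [hz₁, hz₂, ← mul_smul, ← pow_succ']⟩
  have hbij : Function.Bijective (LinearMap.lsmul A K (c ^ k)) := by
    constructor
    · intro a b hab
      have h1 : c ^ k • (a - b) = 0 := by
        simp only [smul_sub]
        simpa [LinearMap.lsmul_apply] using sub_eq_zero_of_eq hab
      exact sub_eq_zero.mp (hinj k _ h1)
    · intro y
      obtain ⟨z, hz⟩ := hsur k y
      exact ⟨z, hz.symm⟩
  set Y : ModuleCat.{u} A := ModuleCat.of A K with hYdef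
  let eK : K ≃ₗ[A] K := LinearEquiv.ofBijective (LinearMap.lsmul A K (c ^ k)) hbij
  let eIso : Y ≅ Y := eK.toModuleIso
  -- projective resolution
  let P : ProjectiveResolution (ModuleCat.of A (A ⧸ I ^ k)) :=
    ProjectiveResolution.of (ModuleCat.of A (A ⧸ I ^ k))
  let Q : CochainComplex (ModuleCat.{u} A) ℕ := P.complex.linearYonedaObj A Y
  -- the endomorphism of Q
  let f : Q ⟶ Q := c ^ k • 𝟙 Q
  have hff : ∀ n : ℕ, f.f n = ModuleCat.ofHom (Linear.rightComp A (P.complex.X n) eIso.hom) := by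
    intro n
    apply ModuleCat.hom_ext; apply LinearMap.ext
    intro φ
    apply ModuleCat.hom_ext; apply LinearMap.ext
    intro p
    rfl
  -- f is an isomorphism
  have hisos : ∀ n : ℕ, IsIso (f.f n) := by
    intro n
    rw [hff n]
    refine ⟨ModuleCat.ofHom (Linear.rightComp A (P.complex.X n) eIso.inv), ?_, ?_⟩
    · apply ModuleCat.hom_ext; apply LinearMap.ext
      intro (φ : P.complex.X n ⟶ Y)
      show (φ ≫ eIso.hom) ≫ eIso.inv = φ
      simp
    · apply ModuleCat.hom_ext; apply LinearMap.ext
      intro (φ : P.complex.X n ⟶ Y)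
      show (φ ≫ eIso.inv) ≫ eIso.hom = φ
      simp
  have hIso : IsIso f := @HomologicalComplex.Hom.isIso_of_components _ _ _ _ _ _ _ f hisos
  -- null homotopy on P
  have hcommπ : (c ^ k • 𝟙 P.complex) ≫ P.π = 0 := by
    apply HomologicalComplex.hom_ext
    intro n
    rcases n with _ | n
    · simp only [HomologicalComplex.comp_f, HomologicalComplex.smul_f_apply,
        HomologicalComplex.id_f, HomologicalComplex.zero_f, Linear.smul_comp, Category.id_comp]
      apply ModuleCat.hom_ext; apply LinearMap.ext
      intro x
      exact hm0 ((P.π.f 0).hom x)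
    · apply (HomologicalComplex.isZero_single_obj_X (ComplexShape.down ℕ) 0
        (ModuleCat.of A (A ⧸ I ^ k)) (n + 1) (by simp)).eq_of_tgt
  let hP : Homotopy (c ^ k • 𝟙 P.complex) 0 := ProjectiveResolution.liftHomotopyZero _ hcommπ
  have hkey : ∀ n : ℕ, (c ^ k • 𝟙 (P.complex.X n)) = dNext n hP.hom + prevD n hP.hom := by
    intro n
    have h1 := hP.comm n
    simpa using h1
  -- transfer homotopy to Q
  let hom : ∀ a b : ℕ, Q.X a ⟶ Q.X b := fun a b =>
    ModuleCat.ofHom (Linear.leftComp A Y (hP.hom b a))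
  have hQd : ∀ a b : ℕ, Q.d a b = ModuleCat.ofHom (Linear.leftComp A Y (P.complex.d b a)) :=
    fun a b => ChainComplex.linearYonedaObj_d P.complex A Y a b
  let hQ : Homotopy f 0 := by
    refine Homotopy.mk hom ?_ ?_
    · intro a b hab
      have hz : hP.hom b a = 0 := hP.zero b a (by simpa using hab)
      show ModuleCat.ofHom (Linear.leftComp A Y (hP.hom b a)) = 0
      rw [hz]
      apply ModuleCat.hom_ext; apply LinearMap.ext
      intro φ
      show (0 : P.complex.X b ⟶ P.complex.X a) ≫ φ = 0
      simp
    · intro n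
      have hf : f.f n = c ^ k • 𝟙 (Q.X n) := by simp [f]
      rw [hf, dNext_eq hom (show (ComplexShape.up ℕ).Rel n (n + 1) by simp)]
      rcases n with _ | n
      · rw [prevD_eq_zero hom 0 (by simp)]
        simp only [HomologicalComplex.zero_f, add_zero]
        have hk0 : (c ^ k • 𝟙 (P.complex.X 0)) = hP.hom 0 1 ≫ P.complex.d 1 0 := by
          have h1 := hkey 0
          rw [dNext_eq_zero hP.hom 0 (by simp), zero_add,
            prevD_eq hP.hom (show (ComplexShape.down ℕ).Rel 1 0 by simp)] at h1
          exact h1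
        apply ModuleCat.hom_ext; apply LinearMap.ext
        intro (φ : P.complex.X 0 ⟶ Y)
        show c ^ k • φ = (hom 1 0) ((Q.d 0 1) φ)
        rw [hQd 0 1]
        show c ^ k • φ = hP.hom 0 1 ≫ (P.complex.d 1 0 ≫ φ)
        rw [← Category.assoc, ← hk0]
        simp
      · rw [prevD_eq hom (show (ComplexShape.up ℕ).Rel n (n + 1) by simp)]
        simp only [HomologicalComplex.zero_f, add_zero]
        have hkP : hP.hom (n + 1) (n + 2) ≫ P.complex.d (n + 2) (n + 1)
              + P.complex.d (n + 1) n ≫ hP.hom n (n + 1)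
            = (c ^ k • 𝟙 (P.complex.X (n + 1))) := by
          have h1 := hkey (n + 1)
          rw [dNext_eq hP.hom (show (ComplexShape.down ℕ).Rel (n + 1) n by simp),
            prevD_eq hP.hom (show (ComplexShape.down ℕ).Rel (n + 2) (n + 1) by simp)] at h1
          exact (add_comm _ _).trans h1.symm
        apply ModuleCat.hom_ext; apply LinearMap.ext
        intro (φ : P.complex.X (n + 1) ⟶ Y)
        show c ^ k • φ
          = (hom (n + 2) (n + 1)) ((Q.d (n + 1) (n + 2)) φ) + (Q.d n (n + 1)) ((hom (n + 1) n) φ)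
        rw [hQd (n + 1) (n + 2), hQd n (n + 1)]
        show c ^ k • φ = hP.hom (n + 1) (n + 2) ≫ (P.complex.d (n + 2) (n + 1) ≫ φ)
          + P.complex.d (n + 1) n ≫ (hP.hom n (n + 1) ≫ φ)
        rw [← Category.assoc, ← Category.assoc, ← Preadditive.add_comp, hkP]
        simp
  -- conclude
  have hsub : Subsingleton (Q.homology i) := @aux_homology_subsingleton A _ Q f hIso hQ i
  let e := P.isoExt (R := A) i Y
  constructor
  intro x y
  have h1 : e.hom x = e.hom y := Subsingleton.elim _ _
  have hz : ∀ z, e.inv (e.hom z) = z := by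
    intro z
    have h2 : e.inv (e.hom z) = (e.hom ≫ e.inv) z := rfl
    rw [e.hom_inv_id] at h2
    simpa using h2
  calc x = e.inv (e.hom x) := (hz x).symm
    _ = e.inv (e.hom y) := by rw [h1]
    _ = y := hz y
end

section
/- Let A ⊆ S be an extension of commutative rings and C a multiplicatively closed set of nonzerodivisors of S contained in A such that for each c ∈ C the map A/cA → S/cS is an isomorphism. Then for ideals: the maps I ↦ IS and J ↦ J ∩ A give a one-to-one correspondence between ideals of A meeting C and ideals of S meeting C, i.e., for any ideal I of A with I ∩ C ≠ ∅ one has IS ∩ A = I, and for any ideal J of S with J ∩ C ≠ ∅ one has (J ∩ A)S = J. -/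
/-- Let `A ⊆ S` be a `C`-analytic extension: `C` is a multiplicatively closed set of
nonzerodivisors of `S` contained in `A` such that for each `c ∈ C` the map `A/cA → S/cS`
is an isomorphism (equivalently `S = A + cS` and `cS ∩ A = cA`).  Then `I ↦ IS` and
`J ↦ J ∩ A` give a one-to-one correspondence between ideals of `A` meeting `C` and ideals
of `S` meeting `C`: for an ideal `I` of `A` meeting `C` one has `IS ∩ A = I`, and for an
ideal `J` of `S` meeting `C` one has `(J ∩ A)S = J`. -/
theorem stmt13 (S : Type*) [CommRing S] (A : Subring S) (C : Submonoid S)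
    (hCA : (C : Set S) ⊆ A) (hreg : (C : Set S) ⊆ nonZeroDivisors S)
    (h1 : ∀ c ∈ C, ∀ s : S, ∃ a ∈ A, ∃ t : S, s = a + c * t)
    (h2 : ∀ c ∈ C, ∀ a : S, a ∈ A → (∃ t : S, a = c * t) → ∃ b ∈ A, a = c * b) :
    (∀ I : Ideal A, (∃ x : A, x ∈ I ∧ (x : S) ∈ C) →
        (I.map A.subtype).comap A.subtype = I) ∧
      (∀ J : Ideal S, (∃ x : S, x ∈ J ∧ x ∈ C) →
        (J.comap A.subtype).map A.subtype = J) := by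
  constructor
  · rintro I ⟨x, hxI, hxC⟩
    apply le_antisymm
    · intro a ha
      have ha' : (a : S) ∈ I.map A.subtype := ha
      -- key claim: every element of I.map is of form i + x * t
      have key : ∀ s ∈ I.map A.subtype, ∃ i : A, i ∈ I ∧ ∃ t : S, s = (i : S) + (x : S) * t := by
        intro s hs
        rw [Ideal.map, Ideal.span] at hs
        refine Submodule.span_induction ?_ ?_ ?_ ?_ hs
        · rintro _ ⟨y, hy, rfl⟩
          exact ⟨y, hy, 0, by simp⟩
        · exact ⟨0, zero_mem _, 0, by simp⟩
        · rintro s t _ _ ⟨i, hi, u, rfl⟩ ⟨j, hj, v, rfl⟩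
          exact ⟨i + j, add_mem hi hj, u + v, by push_cast; ring⟩
        · rintro r s _ ⟨i, hi, u, rfl⟩
          obtain ⟨a, haA, t, rfl⟩ := h1 (x : S) hxC r
          refine ⟨⟨a, haA⟩ * i, I.mul_mem_left _ hi, a * u + t * (i : S) + (x : S) * (t * u), ?_⟩
          simp only [smul_eq_mul]
          push_cast
          ring
      obtain ⟨i, hi, t, hst⟩ := key _ ha'
      have hsub : ((a - i : A) : S) = (x : S) * t := by push_cast; linear_combination hst
      obtain ⟨b, hbA, hb⟩ := h2 (x : S) hxC ((a - i : A) : S) (a - i).2 ⟨t, hsub⟩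
      have : a = i + x * ⟨b, hbA⟩ := by
        apply Subtype.ext
        push_cast at hb ⊢
        linear_combination hb
      rw [this]
      exact add_mem hi (Ideal.mul_mem_right _ _ hxI)
    · intro a ha
      exact Ideal.mem_map_of_mem _ ha
  · rintro J ⟨c, hcJ, hcC⟩
    apply le_antisymm
    · exact Ideal.map_le_iff_le_comap.mpr le_rfl
    · intro s hs
      obtain ⟨a, haA, t, rfl⟩ := h1 c hcC s
      have haJ : a ∈ J := by
        have : a = (a + c * t) - c * t := by ring
        rw [this]
        exact sub_mem hs (J.mul_mem_right _ hcJ)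
      have h1' : (⟨a, haA⟩ : A) ∈ J.comap A.subtype := haJ
      have h2' : (⟨c, hCA hcC⟩ : A) ∈ J.comap A.subtype := hcJ
      exact add_mem (Ideal.mem_map_of_mem _ h1')
        (Ideal.mul_mem_right t _ (Ideal.mem_map_of_mem A.subtype h2'))
end

section
/- Let A ⊆ S be a C-analytic extension with A quasilocal, and let J be a finitely generated ideal of S meeting C that can be generated by n elements. Then J ∩ A can be generated by n elements, and moreover μ_A(J ∩ A) = μ_S(J). -/
/-- The minimal number of generators of an ideal. -/
noncomputable def minGens {A : Type*} [CommRing A] (I : Ideal A) : ℕ :=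
  sInf {n : ℕ | ∃ s : Finset A, s.card = n ∧ Ideal.span (s : Set A) = I}

lemma minGens_top {R : Type*} [CommRing R] [Nontrivial R] : minGens (⊤ : Ideal R) = 1 := by
  have hmem : 1 ∈ {n : ℕ | ∃ s : Finset R, s.card = n ∧ Ideal.span (s : Set R) = ⊤} :=
    ⟨{1}, Finset.card_singleton 1, by simp⟩
  refine le_antisymm (Nat.sInf_le hmem) (Nat.one_le_iff_ne_zero.mpr ?_)
  intro h0
  rw [minGens, Nat.sInf_eq_zero] at h0
  rcases h0 with ⟨s, hcard, hspan⟩ | hempty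
  · rw [Finset.card_eq_zero] at hcard
    subst hcard
    simp only [Finset.coe_empty, Ideal.span_empty] at hspan
    exact absurd hspan bot_ne_top
  · exact absurd hmem (hempty ▸ Set.notMem_empty 1)

/-- Key lemma: given a finset generating `J`, produce a finset of `A` of at most the same
cardinality generating `J ∩ A`, and show `(J ∩ A)S = J`. -/
lemma aux14 (S : Type*) [CommRing S] (A : Subring S) [IsLocalRing A]
    (C : Submonoid S)
    (hCA : (C : Set S) ⊆ A) (hreg : (C : Set S) ⊆ nonZeroDivisors S)
    (h1 : ∀ c ∈ C, ∀ s : S, ∃ a ∈ A, ∃ t : S, s = a + c * t)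
    (h2 : ∀ c ∈ C, ∀ a : S, a ∈ A → (∃ t : S, a = c * t) → ∃ b ∈ A, a = c * b)
    (J : Ideal S) {c : S} (hcJ : c ∈ J) (hcC : c ∈ C)
    (hcm : ¬IsUnit (⟨c, hCA hcC⟩ : A))
    (s : Finset S) (hs : Ideal.span (s : Set S) = J) :
    ∃ t : Finset A, t.card ≤ s.card ∧ Ideal.span (t : Set A) = J.comap A.subtype ∧
      (J.comap A.subtype).map A.subtype = J := by
  classical
  set c2 : S := c * c with hc2def
  have hc2C : c2 ∈ C := mul_mem hcC hcC
  have hc2A : c2 ∈ A := hCA hc2C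
  have hc2J : c2 ∈ J := J.mul_mem_left c hcJ
  -- choose decompositions x = f x + c2 * g x
  have hx : ∀ x : S, ∃ a, a ∈ A ∧ ∃ t, x = a + c2 * t := by
    intro x
    obtain ⟨a, ha, t, ht⟩ := h1 c2 hc2C x
    exact ⟨a, ha, t, ht⟩
  choose f hfA g hfg using hx
  set G : Finset S := insert c2 (s.image f) with hGdef
  have hGA : ∀ z ∈ G, z ∈ A := by
    intro z hz
    rcases Finset.mem_insert.mp hz with h | h
    · exact h ▸ hc2A
    · obtain ⟨x, _, rfl⟩ := Finset.mem_image.mp h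
      exact hfA x
  have hsJ : ∀ x ∈ s, x ∈ J := fun x hx => hs ▸ Ideal.subset_span hx
  have hGJ : ∀ z ∈ G, z ∈ J := by
    intro z hz
    rcases Finset.mem_insert.mp hz with h | h
    · exact h ▸ hc2J
    · obtain ⟨x, hxs, rfl⟩ := Finset.mem_image.mp h
      have : f x = x - c2 * g x := eq_sub_of_add_eq (hfg x).symm
      rw [this]
      exact sub_mem (hsJ x hxs) (J.mul_mem_right _ hc2J)
  have claim1 : Ideal.span (G : Set S) = J := by
    apply le_antisymm
    · rw [Ideal.span_le]
      exact fun z hz => hGJ z hz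
    · rw [← hs, Ideal.span_le]
      intro x hxs
      have hmemf : f x ∈ Ideal.span (G : Set S) :=
        Ideal.subset_span (Finset.mem_insert_of_mem (Finset.mem_image_of_mem f hxs))
      have hmemc : c2 ∈ Ideal.span (G : Set S) :=
        Ideal.subset_span (Finset.mem_insert_self _ _)
      have : x = f x + c2 * g x := hfg x
      rw [SetLike.mem_coe, this]
      exact add_mem hmemf (Ideal.mul_mem_right _ _ hmemc)
  -- lift G to a finset of A
  set F' : Finset A := G.attach.image (fun z => (⟨z.1, hGA z.1 z.2⟩ : A)) with hF'def
  set F₀ : Finset A := (s.image f).attach.image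
    (fun z => (⟨z.1, hGA z.1 (Finset.mem_insert_of_mem z.2)⟩ : A)) with hF0def
  have hF'mem : ∀ b : A, b ∈ F' ↔ (b : S) ∈ G := by
    intro b
    simp only [hF'def, Finset.mem_image, Finset.mem_attach, true_and, Subtype.exists]
    constructor
    · rintro ⟨z, hz, rfl⟩; exact hz
    · intro hb; exact ⟨b.1, hb, Subtype.ext rfl⟩
  have hF0mem : ∀ b : A, b ∈ F₀ ↔ (b : S) ∈ s.image f := by
    intro b
    simp only [hF0def, Finset.mem_image, Finset.mem_attach, true_and, Subtype.exists]
    constructor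
    · rintro ⟨z, hz, rfl⟩; exact hz
    · intro hb; exact ⟨b.1, hb, Subtype.ext rfl⟩
  set N : Ideal A := J.comap A.subtype with hNdef
  have claim2 : Ideal.span (F' : Set A) = N := by
    apply le_antisymm
    · rw [Ideal.span_le]
      intro b hb
      exact hGJ b ((hF'mem b).mp hb)
    · rintro ⟨y, hyA⟩ hy
      have hyJ : y ∈ J := hy
      rw [← claim1] at hyJ
      obtain ⟨r, -, hr⟩ := Submodule.mem_span_finset.mp hyJ
      simp only [smul_eq_mul] at hr
      choose b hbA t hbt using fun z => h1 c2 hc2C (r z)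
      have hsum : y = (∑ z ∈ G, b z * z) + c2 * (∑ z ∈ G, t z * z) := by
        rw [← hr, Finset.mul_sum, ← Finset.sum_add_distrib]
        apply Finset.sum_congr rfl
        intro z _
        rw [hbt z]; ring
      have hsA : (∑ z ∈ G, b z * z) ∈ A :=
        sum_mem fun z hz => A.mul_mem (hbA z) (hGA z hz)
      have hcwA : c2 * (∑ z ∈ G, t z * z) ∈ A := by
        have : c2 * (∑ z ∈ G, t z * z) = y - (∑ z ∈ G, b z * z) := by
          rw [hsum]; ring
        rw [this]
        exact A.sub_mem hyA hsA
      obtain ⟨b₀, hb₀A, hb₀⟩ := h2 c2 hc2C _ hcwA ⟨_, rfl⟩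
      have key : (⟨y, hyA⟩ : A) =
          (∑ z ∈ G.attach, (⟨b z.1, hbA z.1⟩ : A) * ⟨z.1, hGA z.1 z.2⟩)
            + (⟨c2, hc2A⟩ : A) * ⟨b₀, hb₀A⟩ := by
        apply Subtype.ext
        push_cast
        rw [Finset.sum_attach G (fun z => b z * z)]
        rw [hsum, hb₀]
      rw [key]
      apply add_mem
      · apply Ideal.sum_mem
        intro z _
        apply Ideal.mul_mem_left
        apply Ideal.subset_span
        exact (hF'mem _).mpr z.2
      · apply Ideal.mul_mem_right
        apply Ideal.subset_span
        exact (hF'mem _).mpr (Finset.mem_insert_self _ _)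
  set I₀ : Ideal A := Ideal.span (F₀ : Set A) with hI0def
  have hcN : (⟨c, hCA hcC⟩ : A) ∈ N := hcJ
  have hcmax : (⟨c, hCA hcC⟩ : A) ∈ IsLocalRing.maximalIdeal A := hcm
  have hNle' : Ideal.span (F' : Set A) ≤ I₀ ⊔ (IsLocalRing.maximalIdeal A) • N := by
    rw [Ideal.span_le]
    intro x hx
    have hxG := (hF'mem x).mp hx
    rcases Finset.mem_insert.mp hxG with h | h
    · have hxeq : x = (⟨c, hCA hcC⟩ : A) * ⟨c, hCA hcC⟩ := Subtype.ext h
      rw [hxeq]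
      exact le_sup_right (α := Ideal A) (Submodule.smul_mem_smul hcmax hcN)
    · exact le_sup_left (α := Ideal A) (Ideal.subset_span ((hF0mem x).mpr h))
  have hNle : N ≤ I₀ ⊔ (IsLocalRing.maximalIdeal A) • N :=
    le_trans (le_of_eq claim2.symm) hNle'
  have hNfg : N.FG := ⟨F', claim2⟩
  have hjac : IsLocalRing.maximalIdeal A ≤ Ideal.jacobson ⊥ :=
    IsLocalRing.maximalIdeal_le_jacobson ⊥
  have hNI₀ : N ≤ I₀ := Submodule.le_of_le_smul_of_le_jacobson_bot hNfg hjac hNle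
  have hI₀N : I₀ ≤ N := by
    rw [Ideal.span_le]
    intro x hx
    exact hGJ x (Finset.mem_insert_of_mem ((hF0mem x).mp hx))
  have hspanF₀ : Ideal.span (F₀ : Set A) = N := le_antisymm hI₀N hNI₀
  have hcard : F₀.card ≤ s.card := by
    calc F₀.card ≤ (s.image f).attach.card := Finset.card_image_le
    _ = (s.image f).card := Finset.card_attach
    _ ≤ s.card := Finset.card_image_le
  have hmap : N.map A.subtype = J := by
    apply le_antisymm (Ideal.map_comap_le)
    have step : Ideal.span (G : Set S) ≤ N.map A.subtype := by
      rw [Ideal.span_le]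
      intro z hz
      exact Ideal.mem_map_of_mem A.subtype (show (⟨z, hGA z hz⟩ : A) ∈ N from hGJ z hz)
    exact le_trans (le_of_eq claim1.symm) step
  exact ⟨F₀, hcard, hspanF₀, hmap⟩

/-- Let `A ⊆ S` be a `C`-analytic extension with `A` quasilocal, and let `J` be a finitely
generated ideal of `S` meeting `C` that can be generated by `n` elements.  Then `J ∩ A`
can be generated by `n` elements, and moreover `μ_A(J ∩ A) = μ_S(J)`. -/
theorem stmt14 (S : Type*) [CommRing S] (A : Subring S) [IsLocalRing A]
    (C : Submonoid S)
    (hCA : (C : Set S) ⊆ A) (hreg : (C : Set S) ⊆ nonZeroDivisors S)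
    (h1 : ∀ c ∈ C, ∀ s : S, ∃ a ∈ A, ∃ t : S, s = a + c * t)
    (h2 : ∀ c ∈ C, ∀ a : S, a ∈ A → (∃ t : S, a = c * t) → ∃ b ∈ A, a = c * b)
    (J : Ideal S) (hJC : ∃ x : S, x ∈ J ∧ x ∈ C)
    (n : ℕ) (hJn : ∃ s : Finset S, s.card ≤ n ∧ Ideal.span (s : Set S) = J) :
    (∃ t : Finset A, t.card ≤ n ∧ Ideal.span (t : Set A) = J.comap A.subtype) ∧
      minGens (J.comap A.subtype) = minGens J := by
  classical
  obtain ⟨c, hcJ, hcC⟩ := hJC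
  have hcA : c ∈ A := hCA hcC
  have hSnt : Nontrivial S := by
    refine ⟨0, 1, fun h => zero_ne_one (α := A) (Subtype.ext ?_)⟩
    simpa using h
  obtain ⟨s, hsn, hss⟩ := hJn
  by_cases hu : IsUnit (⟨c, hcA⟩ : A)
  · -- c is a unit in A, so J = ⊤
    obtain ⟨u, huc⟩ := hu
    have h1J : (1 : S) ∈ J := by
      have : c * ((↑(u⁻¹) : A) : S) = 1 := by
        have : ((↑(u * u⁻¹) : A) : S) = 1 := by rw [mul_inv_cancel]; rfl
        rw [← this]
        push_cast [huc]
        rfl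
      rw [← this]
      exact J.mul_mem_right _ hcJ
    have hJtop : J = ⊤ := Ideal.eq_top_iff_one J |>.mpr h1J
    have hcomap : J.comap A.subtype = ⊤ := by rw [hJtop, Ideal.comap_top]
    have hn1 : 1 ≤ n := by
      rcases Finset.eq_empty_or_nonempty s with rfl | hne
      · exfalso
        simp only [Finset.coe_empty, Ideal.span_empty, hJtop] at hss
        exact absurd hss bot_ne_top
      · exact le_trans (Finset.card_pos.mpr hne) hsn
    refine ⟨⟨{1}, by simpa using hn1, by rw [hcomap]; simp⟩, ?_⟩
    rw [hcomap, hJtop, minGens_top, minGens_top]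
  · -- main case: c is a nonunit in A
    obtain ⟨F₀, hF₀card, hF₀span, hmap⟩ :=
      aux14 S A C hCA hreg h1 h2 J hcJ hcC hu s hss
    refine ⟨⟨F₀, le_trans hF₀card hsn, hF₀span⟩, ?_⟩
    set N : Ideal A := J.comap A.subtype with hNdef
    have hJne : {k : ℕ | ∃ u : Finset S, u.card = k ∧ Ideal.span (u : Set S) = J}.Nonempty :=
      ⟨s.card, s, rfl, hss⟩
    have hNne : {k : ℕ | ∃ u : Finset A, u.card = k ∧ Ideal.span (u : Set A) = N}.Nonempty :=
      ⟨F₀.card, F₀, rfl, hF₀span⟩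
    apply le_antisymm
    · -- minGens N ≤ minGens J
      obtain ⟨s', hs'card, hs'span⟩ := Nat.sInf_mem hJne
      obtain ⟨F₁, hF₁card, hF₁span, -⟩ :=
        aux14 S A C hCA hreg h1 h2 J hcJ hcC hu s' hs'span
      calc minGens N ≤ F₁.card := Nat.sInf_le ⟨F₁, rfl, hF₁span⟩
      _ ≤ s'.card := hF₁card
      _ = minGens J := hs'card
    · -- minGens J ≤ minGens N
      obtain ⟨t, htcard, htspan⟩ := Nat.sInf_mem hNne
      set u : Finset S := t.image A.subtype with hudef
      have hucard : u.card = t.card :=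
        Finset.card_image_of_injective t (Subtype.val_injective)
      have huspan : Ideal.span (u : Set S) = J := by
        rw [hudef, Finset.coe_image, ← Ideal.map_span, htspan, hmap]
      calc minGens J ≤ u.card := Nat.sInf_le ⟨u, rfl, huspan⟩
      _ = t.card := hucard
      _ = minGens N := htcard
end

section
/- Let R ⊆ S be commutative rings with a multiplicatively closed set C of nonzerodivisors of S such that R_C = S_C, the extension R ⊆ S is quadratic, and there is a subring A ⊆ R with A ⊆ S C-analytic. Suppose I is an ideal of R contracted from S (I = IS ∩ R) meeting C, and J is a finitely generated ideal of S with J ⊆ IS and (IS)^{n+1} = J(IS)^n. Then the ideal J' = (J ∩ A)R of R satisfies J' ⊆ I and I^{n+2} = J'·I^{n+1}; that is, J' is a reduction of I with reduction number at most n+1. -/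
open Ideal

lemma claim1' {S : Type*} [CommRing S] (A : Subring S) (C : Submonoid S)
    (hCA : (C : Set S) ⊆ A)
    (h1 : ∀ c ∈ C, ∀ s : S, ∃ a ∈ A, ∃ t : S, s = a + c * t)
    (K : Ideal S) (c : S) (hc : c ∈ C) (hcK : c ∈ K) :
    (K.comap A.subtype).map A.subtype = K := by
  apply le_antisymm Ideal.map_comap_le
  intro s hs
  obtain ⟨a, haA, t, hst⟩ := h1 c hc s
  have haK : a ∈ K := by
    have h : a = s - c * t := by rw [hst]; ring
    rw [h]
    exact sub_mem hs (K.mul_mem_right t hcK)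
  have hamem : a ∈ (K.comap A.subtype).map A.subtype :=
    Ideal.mem_map_of_mem _ (show (⟨a, haA⟩ : A) ∈ K.comap A.subtype from haK)
  have hcmem : c ∈ (K.comap A.subtype).map A.subtype :=
    Ideal.mem_map_of_mem _ (show (⟨c, hCA hc⟩ : A) ∈ K.comap A.subtype from hcK)
  rw [hst]
  exact add_mem hamem (Ideal.mul_mem_right t _ hcmem)

lemma claim2' {S : Type*} [CommRing S] (A : Subring S) (C : Submonoid S)
    (h1 : ∀ c ∈ C, ∀ s : S, ∃ a ∈ A, ∃ t : S, s = a + c * t)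
    (h2 : ∀ c ∈ C, ∀ a : S, a ∈ A → (∃ t : S, a = c * t) → ∃ b ∈ A, a = c * b)
    (B : Ideal A) (d : A) (hdC : (d : S) ∈ C) (hdB : d ∈ B) :
    (B.map A.subtype).comap A.subtype = B := by
  apply le_antisymm _ Ideal.le_comap_map
  have hT : ∀ s ∈ B.map A.subtype, ∃ b ∈ B, ∃ t : S, s = (b : S) + (d : S) * t := by
    intro s hs
    rw [Ideal.map] at hs
    induction hs using Submodule.span_induction with
    | mem x hx =>
        obtain ⟨b, hb, rfl⟩ := hx
        exact ⟨b, hb, 0, by simp⟩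
    | zero => exact ⟨0, zero_mem _, 0, by push_cast; ring⟩
    | add x y _ _ ihx ihy =>
        obtain ⟨b1, hb1, t1, rfl⟩ := ihx
        obtain ⟨b2, hb2, t2, rfl⟩ := ihy
        exact ⟨b1 + b2, add_mem hb1 hb2, t1 + t2, by push_cast; ring⟩
    | smul r x _ ihx =>
        obtain ⟨b, hb, t, rfl⟩ := ihx
        obtain ⟨a', ha'A, t', hr⟩ := h1 (d : S) hdC r
        refine ⟨⟨a', ha'A⟩ * b, B.mul_mem_left _ hb, (a' * t + t' * (b : S) + (d : S) * t' * t),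
          ?_⟩
        rw [smul_eq_mul, hr]
        push_cast
        ring
  intro a ha
  obtain ⟨b, hb, t, hab⟩ := hT (a : S) ha
  obtain ⟨b', hb'A, hab'⟩ := h2 (d : S) hdC ((a : S) - (b : S))
    (sub_mem a.2 b.2) ⟨t, by rw [hab]; ring⟩
  have : a = b + d * ⟨b', hb'A⟩ := by
    apply Subtype.ext
    push_cast
    have : (a : S) - b = d * b' := hab'
    linear_combination this
  rw [this]
  exact add_mem hb (B.mul_mem_right _ hdB)

/-- Let `R ⊆ S` be commutative rings with a multiplicatively closed set `C` of
nonzerodivisors of `S` such that `R_C = S_C`, the extension `R ⊆ S` is quadratic, and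
there is a subring `A ⊆ R` with `A ⊆ S` `C`-analytic.  If `I` is an ideal of `R`
contracted from `S` and meeting `C`, and `J` is a finitely generated ideal of `S` with
`J ⊆ IS` and `(IS)ⁿ⁺¹ = J(IS)ⁿ`, then `J' = (J ∩ A)R` satisfies `J' ⊆ I` and
`Iⁿ⁺² = J'·Iⁿ⁺¹`; that is, `J'` is a reduction of `I` with reduction number at most
`n + 1`. -/
theorem stmt19 (S : Type*) [CommRing S] (R A : Subring S) (hAR : A ≤ R)
    (C : Submonoid S) (hreg : (C : Set S) ⊆ nonZeroDivisors S) (hCA : (C : Set S) ⊆ A)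
    (hloc : ∀ s : S, ∃ c ∈ C, c * s ∈ R)
    (hquad : ∀ s t : S, ∃ a b r : R, s * t = s * (a : S) + t * (b : S) + (r : S))
    (h1 : ∀ c ∈ C, ∀ s : S, ∃ a ∈ A, ∃ t : S, s = a + c * t)
    (h2 : ∀ c ∈ C, ∀ a : S, a ∈ A → (∃ t : S, a = c * t) → ∃ b ∈ A, a = c * b)
    (I : Ideal R) (hIcontr : I = (I.map R.subtype).comap R.subtype)
    (hIC : ∃ x : R, x ∈ I ∧ (x : S) ∈ C)
    (J : Ideal S) (hJfg : J.FG) (hJI : J ≤ I.map R.subtype)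
    (n : ℕ) (hred : (I.map R.subtype) ^ (n + 1) = J * (I.map R.subtype) ^ n) :
    Ideal.span {x : R | (x : S) ∈ J ∧ (x : S) ∈ A} ≤ I ∧
      I ^ (n + 2) = Ideal.span {x : R | (x : S) ∈ J ∧ (x : S) ∈ A} * I ^ (n + 1) := by
  obtain ⟨x₀, hx₀I, hx₀C⟩ := hIC
  set IS : Ideal S := I.map R.subtype with hISdef
  set J'' : Ideal R := Ideal.span {x : R | (x : S) ∈ J ∧ (x : S) ∈ A} with hJ''def
  have hx₀IS : (x₀ : S) ∈ IS := Ideal.mem_map_of_mem _ hx₀I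
  have hx₀A : (x₀ : S) ∈ A := hCA hx₀C
  -- a power of x₀ lies in J
  have hcJ : (x₀ : S) ^ (n + 1) ∈ J := by
    have hp : (x₀ : S) ^ (n + 1) ∈ IS ^ (n + 1) := Ideal.pow_mem_pow hx₀IS _
    rw [hred] at hp
    exact (Ideal.mul_le_left : J * IS ^ n ≤ J) hp
  set JA : Ideal A := J.comap A.subtype with hJAdef
  set DA : Ideal A := IS.comap A.subtype with hDAdef
  have hJA : JA.map A.subtype = J :=
    claim1' A C hCA h1 J _ (pow_mem hx₀C (n + 1)) hcJ
  have hDA : DA.map A.subtype = IS := claim1' A C hCA h1 IS _ hx₀C hx₀IS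
  set B : Ideal A := JA * DA ^ n with hBdef
  have hmapB : B.map A.subtype = IS ^ (n + 1) := by
    rw [hBdef, Ideal.map_mul, Ideal.map_pow, hJA, hDA, ← hred]
  set dA : A := ⟨(x₀ : S), hx₀A⟩ with hdAdef
  set d : A := dA ^ (2 * n + 1) with hddef
  have hdB : d ∈ B := by
    have h : d = dA ^ (n + 1) * dA ^ n := by rw [hddef, ← pow_add]; ring_nf
    rw [h]
    refine Ideal.mul_mem_mul ?_ (Ideal.pow_mem_pow ?_ n)
    · show A.subtype (dA ^ (n + 1)) ∈ J
      rw [map_pow]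
      exact hcJ
    · exact hx₀IS
  have hdC : (d : S) ∈ C := by
    have h : (d : S) = (x₀ : S) ^ (2 * n + 1) := by
      rw [hddef, SubmonoidClass.coe_pow]
    rw [h]
    exact pow_mem hx₀C _
  have hB : (B.map A.subtype).comap A.subtype = B := claim2' A C h1 h2 B d hdC hdB
  set f : A →+* R := Subring.inclusion hAR with hfdef
  set IA : Ideal R := DA.map f with hIAdef
  have hcoef : ∀ a : A, ((f a : R) : S) = (a : S) := fun a => rfl
  have hIAle : IA ≤ I := by
    rw [hIAdef, Ideal.map_le_iff_le_comap]
    intro a haDA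
    have : ((f a : R) : S) ∈ IS := haDA
    show f a ∈ I
    rw [hIcontr]
    exact this
  have hfJA : JA.map f ≤ J'' := by
    rw [Ideal.map_le_iff_le_comap]
    intro a haJA
    show f a ∈ J''
    exact Ideal.subset_span ⟨haJA, a.2⟩
  have step2 : IA ^ (n + 1) ≤ J'' * IA ^ n := by
    have hDpow : DA ^ (n + 1) ≤ B := by
      have h5 : DA ^ (n + 1) ≤ (IS ^ (n + 1)).comap A.subtype := by
        rw [← Ideal.map_le_iff_le_comap, Ideal.map_pow, hDA]
      rwa [← hmapB, hB] at h5
    calc IA ^ (n + 1) = (DA ^ (n + 1)).map f := by rw [hIAdef, Ideal.map_pow]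
      _ ≤ B.map f := Ideal.map_mono hDpow
      _ = JA.map f * (DA.map f) ^ n := by rw [hBdef, Ideal.map_mul, Ideal.map_pow]
      _ ≤ J'' * IA ^ n := Ideal.mul_mono hfJA le_rfl
  have hmemIA : ∀ z : R, (z : S) ∈ A → z ∈ I → z ∈ IA := by
    intro z hzA hzI
    have hz : f ⟨(z : S), hzA⟩ = z := Subtype.ext rfl
    rw [← hz]
    refine Ideal.mem_map_of_mem f ?_
    show ((z : R) : S) ∈ IS
    exact Ideal.mem_map_of_mem R.subtype hzI
  have hx₀IA : x₀ ∈ IA := hmemIA x₀ hx₀A hx₀I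
  have hIxy : ∀ x ∈ I, ∀ y ∈ I, x * y ∈ IA * I := by
    intro x hx y hy
    obtain ⟨a, haA, s, hxs⟩ := h1 _ hx₀C (x : S)
    obtain ⟨b, hbA, t, hyt⟩ := h1 _ hx₀C (y : S)
    set aR : R := ⟨a, hAR haA⟩ with haRdef
    set bR : R := ⟨b, hAR hbA⟩ with hbRdef
    have haI : aR ∈ I := by
      rw [hIcontr]
      show a ∈ IS
      have h : a = (x : S) - (x₀ : S) * s := by rw [hxs]; ring
      rw [h]
      exact sub_mem (Ideal.mem_map_of_mem R.subtype hx) (IS.mul_mem_right _ hx₀IS)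
    have hbI : bR ∈ I := by
      rw [hIcontr]
      show b ∈ IS
      have h : b = (y : S) - (x₀ : S) * t := by rw [hyt]; ring
      rw [h]
      exact sub_mem (Ideal.mem_map_of_mem R.subtype hy) (IS.mul_mem_right _ hx₀IS)
    obtain ⟨a', b', r, hst⟩ := hquad s t
    have key : x * y = aR * y + bR * (x - aR) + x₀ * ((x - aR) * a')
        + x₀ * ((y - bR) * b') + x₀ * (x₀ * r) := by
      apply Subtype.ext
      push_cast
      rw [hxs, hyt]
      linear_combination ((x₀ : S)) ^ 2 * hst
    rw [key]
    refine add_mem (add_mem (add_mem (add_mem ?_ ?_) ?_) ?_) ?_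
    · exact Ideal.mul_mem_mul (hmemIA aR haA haI) hy
    · exact Ideal.mul_mem_mul (hmemIA bR hbA hbI) (sub_mem hx haI)
    · exact Ideal.mul_mem_mul hx₀IA (I.mul_mem_right _ (sub_mem hx haI))
    · exact Ideal.mul_mem_mul hx₀IA (I.mul_mem_right _ (sub_mem hy hbI))
    · exact Ideal.mul_mem_mul hx₀IA (I.mul_mem_right _ hx₀I)
  have step1 : ∀ k, I ^ (k + 1) ≤ IA ^ k * I := by
    intro k
    induction k with
    | zero => simp
    | succ k ih =>
      calc I ^ (k + 2) = I ^ (k + 1) * I := pow_succ I (k + 1)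
        _ ≤ (IA ^ k * I) * I := Ideal.mul_mono ih le_rfl
        _ = IA ^ k * (I * I) := mul_assoc _ _ _
        _ ≤ IA ^ k * (IA * I) := Ideal.mul_mono le_rfl (Ideal.mul_le.mpr hIxy)
        _ = (IA ^ k * IA) * I := (mul_assoc _ _ _).symm
        _ = IA ^ (k + 1) * I := by rw [pow_succ]
  have hJ''I : J'' ≤ I := by
    rw [hJ''def, Ideal.span_le]
    rintro x ⟨hxJ, -⟩
    show x ∈ I
    rw [hIcontr]
    exact hJI hxJ
  refine ⟨hJ''I, le_antisymm ?_ ?_⟩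
  · calc I ^ (n + 2) ≤ IA ^ (n + 1) * I := step1 (n + 1)
      _ ≤ (J'' * IA ^ n) * I := Ideal.mul_mono step2 le_rfl
      _ = J'' * (IA ^ n * I) := mul_assoc _ _ _
      _ ≤ J'' * I ^ (n + 1) := by
          refine Ideal.mul_mono le_rfl ?_
          calc IA ^ n * I ≤ I ^ n * I := Ideal.mul_mono (pow_le_pow_left' hIAle n) le_rfl
            _ = I ^ (n + 1) := (pow_succ I n).symm
  · calc J'' * I ^ (n + 1) ≤ I * I ^ (n + 1) := Ideal.mul_mono hJ''I le_rfl
      _ = I ^ (n + 2) := (pow_succ' I (n + 1)).symm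
end
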